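/- arXiv:1607.01842 — 4 statements merged into one kernel-verified Lean document; each statement's English description precedes it below -/
import Mathlib

section
/- Let N ≥ 1 be an integer, H a subgroup of ℤ_N, z ∈ ℤ_N, and f : ℤ_N → ℂ. Define the restriction of f to the coset z + H in the frequency domain by f_A(x) := Σ_{α ∈ z+H} f̂(α)·χ_α(x). Then for every x ∈ ℤ_N, f_A(x) = (1/|H^⊥|) · Σ_{y ∈ H^⊥} f(x − y)·e^{2πi·z·y/N}, where H^⊥ = {a ∈ ℤ_N : e^{2πi·a·h/N} = 1 for all h ∈ H}. -/
open scoped Classical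

/-- The character `χ_a` of `ℤ_N`, given by `χ_a(x) = e^{2πi·a·x/N}`. -/
noncomputable def chr (N : ℕ) (a x : ZMod N) : ℂ :=
  Complex.exp (2 * (Real.pi : ℂ) * Complex.I * (a.val : ℂ) * (x.val : ℂ) / (N : ℂ))

/-- The Fourier transform `f̂(a) = (1/N) Σ_x f(x)·e^{−2πi·a·x/N}`. -/
noncomputable def dft {N : ℕ} [NeZero N] (f : ZMod N → ℂ) (a : ZMod N) : ℂ :=
  (N : ℂ)⁻¹ * ∑ x : ZMod N,
    f x * Complex.exp (-(2 * (Real.pi : ℂ) * Complex.I * (a.val : ℂ) * (x.val : ℂ) / (N : ℂ)))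

/-- The orthogonal set `H^⊥ = {a ∈ ℤ_N : χ_a(h) = 1 for all h ∈ H}`. -/
def perp (N : ℕ) (H : AddSubgroup (ZMod N)) : Set (ZMod N) :=
  {a : ZMod N | ∀ h ∈ H, chr N a h = 1}

/-! ### Auxiliary machinery -/

/-- The basic additive character `E c = e^{2πi·c/N}` on `ℤ_N`. -/
noncomputable def E (N : ℕ) (c : ZMod N) : ℂ :=
  Complex.exp (2 * (Real.pi : ℂ) * Complex.I * (c.val : ℂ) / (N : ℂ))

lemma E_int (N : ℕ) [NeZero N] (m : ℤ) :
    Complex.exp (2 * (Real.pi : ℂ) * Complex.I * (m : ℂ) / (N : ℂ)) = E N (m : ZMod N) := by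
  set v : ℤ := ((m : ZMod N).val : ℤ) with hv
  have hcast : ((v : ZMod N)) = (m : ZMod N) := by
    simp [hv, ZMod.natCast_val, ZMod.intCast_zmod_cast]
  have hdvd : (N : ℤ) ∣ m - v := by
    rw [← ZMod.intCast_zmod_eq_zero_iff_dvd, Int.cast_sub, sub_eq_zero, eq_comm, hcast]
  obtain ⟨k, hk⟩ := hdvd
  have hm : (m : ℂ) = v + N * k := by
    have : m = v + N * k := by linarith [hk]
    exact_mod_cast congrArg (Int.cast : ℤ → ℂ) this
  have hN : (N : ℂ) ≠ 0 := Nat.cast_ne_zero.mpr (NeZero.ne N)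
  have : 2 * (Real.pi : ℂ) * Complex.I * (m : ℂ) / N
      = 2 * (Real.pi : ℂ) * Complex.I * (v : ℂ) / N + k * (2 * Real.pi * Complex.I) := by
    field_simp [hm]; linear_combination hm
  rw [this, Complex.exp_add, Complex.exp_int_mul_two_pi_mul_I, mul_one]
  simp [E, hv]

lemma chr_eq (N : ℕ) [NeZero N] (a x : ZMod N) : chr N a x = E N (a * x) := by
  have h := E_int N ((a.val : ℤ) * (x.val : ℤ))
  push_cast at h
  rw [chr, show 2 * (Real.pi : ℂ) * Complex.I * (a.val : ℂ) * (x.val : ℂ) / (N : ℂ)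
      = 2 * (Real.pi : ℂ) * Complex.I * ((a.val : ℂ) * (x.val : ℂ)) / (N : ℂ) by ring, h]
  congr 1
  simp [ZMod.natCast_val, ZMod.intCast_zmod_cast]

lemma chr_neg (N : ℕ) [NeZero N] (a x : ZMod N) :
    Complex.exp (-(2 * (Real.pi : ℂ) * Complex.I * (a.val : ℂ) * (x.val : ℂ) / (N : ℂ)))
      = E N (-(a * x)) := by
  have h := E_int N (-((a.val : ℤ) * (x.val : ℤ)))
  push_cast at h
  rw [show (-(2 * (Real.pi : ℂ) * Complex.I * (a.val : ℂ) * (x.val : ℂ) / (N : ℂ)))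
      = 2 * (Real.pi : ℂ) * Complex.I * (-((a.val : ℂ) * (x.val : ℂ))) / (N : ℂ) by ring, h]
  congr 1
  simp [ZMod.natCast_val, ZMod.intCast_zmod_cast]

lemma E_add (N : ℕ) [NeZero N] (a b : ZMod N) : E N (a + b) = E N a * E N b := by
  have h1 := E_int N ((a.val : ℤ) + (b.val : ℤ))
  have h2 : (((a.val : ℤ) + (b.val : ℤ) : ℤ) : ZMod N) = a + b := by
    push_cast
    simp [ZMod.natCast_val, ZMod.intCast_zmod_cast]
  rw [h2] at h1
  rw [← h1, E, E, ← Complex.exp_add]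
  push_cast
  congr 1
  ring

lemma E_eq_one_iff (N : ℕ) [NeZero N] (c : ZMod N) : E N c = 1 ↔ c = 0 := by
  constructor
  · intro h
    rw [E, Complex.exp_eq_one_iff] at h
    obtain ⟨n, hn⟩ := h
    have hN : (N : ℂ) ≠ 0 := Nat.cast_ne_zero.mpr (NeZero.ne N)
    have h2πI : (2 * (Real.pi : ℂ) * Complex.I) ≠ 0 := by
      simp [Real.pi_ne_zero, Complex.I_ne_zero, Complex.ofReal_ne_zero]
    have hn' : 2 * (Real.pi : ℂ) * Complex.I * (c.val : ℂ)
        = n * (2 * Real.pi * Complex.I) * N := by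
      rw [div_eq_iff hN] at hn
      linear_combination hn
    have h2 : (c.val : ℂ) = n * N := by
      apply mul_left_cancel₀ h2πI
      linear_combination hn'
    have h3 : (c.val : ℤ) = n * N := by exact_mod_cast h2
    have hlt : (c.val : ℤ) < N := by exact_mod_cast ZMod.val_lt c
    have h0 : (0:ℤ) ≤ c.val := by positivity
    have hNpos : (0:ℤ) < N := by exact_mod_cast Nat.pos_of_ne_zero (NeZero.ne N)
    have hn0 : n = 0 := by
      rcases lt_trichotomy n 0 with h | h | h
      · nlinarith
      · exact h
      · nlinarith
    rw [hn0, zero_mul] at h3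
    have : c.val = 0 := by omega
    exact (ZMod.val_eq_zero c).mp this
  · intro h; simp [h, E]

/-- Shift trick: if `S` is invariant under translation by `h₀` and `E (c·h₀) ≠ 1`,
the character sum over `S` vanishes. -/
lemma sum_shift (N : ℕ) [NeZero N] (c h₀ : ZMod N) (S : Finset (ZMod N))
    (hS : ∀ a, a ∈ S ↔ a + h₀ ∈ S) (hne : E N (c * h₀) ≠ 1) :
    ∑ a ∈ S, E N (c * a) = 0 := by
  have key : ∑ a ∈ S, E N (c * a) = ∑ a ∈ S, E N (c * (a + h₀)) := by
    apply Finset.sum_nbij' (fun a => a - h₀) (fun a => a + h₀)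
    · intro a ha; exact (hS (a - h₀)).mpr (by simpa using ha)
    · intro a ha; exact (hS a).mp ha
    · intro a _; simp
    · intro a _; simp
    · intro a _; simp
  have heq : ∑ a ∈ S, E N (c * a) = (∑ a ∈ S, E N (c * a)) * E N (c * h₀) := by
    conv_lhs => rw [key]
    rw [Finset.sum_mul]
    refine Finset.sum_congr rfl fun a _ => ?_
    rw [mul_add, E_add]
  have h2 : (∑ a ∈ S, E N (c * a)) * (E N (c * h₀) - 1) = 0 := by
    linear_combination -heq
  rcases mul_eq_zero.mp h2 with h | h
  · exact h
  · exact absurd (sub_eq_zero.mp h) hne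

lemma sum_subgroup (N : ℕ) [NeZero N] (H : AddSubgroup (ZMod N)) (c : ZMod N)
    (hc : ∃ h ∈ H, E N (c * h) ≠ 1) :
    ∑ a ∈ Finset.univ.filter (fun a : ZMod N => a ∈ H), E N (c * a) = 0 := by
  obtain ⟨h₀, hh₀, hne⟩ := hc
  apply sum_shift N c h₀ _ _ hne
  intro a
  simp only [Finset.mem_filter, Finset.mem_univ, true_and]
  constructor
  · intro ha; exact H.add_mem ha hh₀
  · intro ha; simpa using H.add_mem ha (H.neg_mem hh₀)

lemma sum_univ_eq_zero (N : ℕ) [NeZero N] (c : ZMod N) (hc : c ≠ 0) :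
    ∑ a : ZMod N, E N (c * a) = 0 := by
  have := sum_shift N c 1 Finset.univ (by simp)
    (by simpa [Ne, E_eq_one_iff N] using hc)
  simpa using this

/-- Character sum over a subgroup: `|H|` on `H^⊥`, zero off it. -/
lemma sum_H (N : ℕ) [NeZero N] (H : AddSubgroup (ZMod N)) (w : ZMod N) :
    ∑ h ∈ Finset.univ.filter (fun a : ZMod N => a ∈ H), E N (w * h)
      = if w ∈ perp N H then ((Finset.univ.filter (fun a : ZMod N => a ∈ H)).card : ℂ)
        else 0 := by
  split_ifs with hw
  · rw [Finset.sum_congr rfl (fun h hh => ?_), Finset.sum_const, nsmul_eq_mul, mul_one]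
    have hmem : h ∈ H := (Finset.mem_filter.mp hh).2
    have := hw h hmem
    rwa [chr_eq] at this
  · apply sum_subgroup
    simp only [perp, Set.mem_setOf_eq, not_forall] at hw
    obtain ⟨h, hh, hne⟩ := hw
    exact ⟨h, hh, by rwa [chr_eq] at hne⟩

lemma card_key (N : ℕ) [NeZero N] (H : AddSubgroup (ZMod N)) :
    ((Finset.univ.filter (fun a : ZMod N => a ∈ perp N H)).card : ℂ) *
      ((Finset.univ.filter (fun a : ZMod N => a ∈ H)).card : ℂ) = N := by
  set HF := Finset.univ.filter (fun a : ZMod N => a ∈ H) with hHF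
  set P := Finset.univ.filter (fun a : ZMod N => a ∈ perp N H) with hPd
  have way1 : ∑ w : ZMod N, ∑ h ∈ HF, E N (w * h) = (P.card : ℂ) * (HF.card : ℂ) := by
    rw [Finset.sum_congr rfl (fun w _ => sum_H N H w)]
    rw [← Finset.sum_filter, Finset.sum_const, nsmul_eq_mul]
  have way2 : ∑ w : ZMod N, ∑ h ∈ HF, E N (w * h) = (N : ℂ) := by
    rw [Finset.sum_comm]
    have hinner : ∀ h : ZMod N, ∑ w : ZMod N, E N (w * h)
        = if h = 0 then (N : ℂ) else 0 := by
      intro h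
      split_ifs with hh
      · simp [hh, E, ZMod.card]
      · rw [← sum_univ_eq_zero N h hh]
        exact Finset.sum_congr rfl fun w _ => by rw [mul_comm]
    rw [Finset.sum_congr rfl (fun h _ => hinner h), Finset.sum_ite_eq' HF 0]
    simp [hHF, H.zero_mem]
  rw [← way1, way2]

/-- The filter-function/convolution identity: the restriction of `f` to the coset
`z + H` of frequencies can be evaluated by averaging `f` over translates by `H^⊥`. -/
theorem stmt1 (N : ℕ) [NeZero N] (H : AddSubgroup (ZMod N)) (z : ZMod N)
    (f : ZMod N → ℂ) (x : ZMod N) :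
    ∑ α ∈ Finset.univ.filter (fun α : ZMod N => ∃ h ∈ H, α = z + h),
        dft f α * chr N α x
      = ((Finset.univ.filter (fun a : ZMod N => a ∈ perp N H)).card : ℂ)⁻¹ *
        ∑ y ∈ Finset.univ.filter (fun a : ZMod N => a ∈ perp N H),
          f (x - y) * chr N z y := by
  classical
  set P := Finset.univ.filter (fun a : ZMod N => a ∈ perp N H) with hPd
  set HF := Finset.univ.filter (fun a : ZMod N => a ∈ H) with hHF
  set A := Finset.univ.filter (fun α : ZMod N => ∃ h ∈ H, α = z + h) with hA
  have hN : (N : ℂ) ≠ 0 := Nat.cast_ne_zero.mpr (NeZero.ne N)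
  -- 0 ∈ perp, so P is nonempty
  have h0P : (0 : ZMod N) ∈ perp N H := by
    intro h _
    simp [chr, ZMod.val_zero]
  have hPcard : (P.card : ℂ) ≠ 0 := by
    have : (0 : ZMod N) ∈ P := by simp [hPd, h0P]
    exact_mod_cast Finset.card_ne_zero_of_mem this
  -- step 1: rewrite each term of the LHS
  have step1 : ∀ α : ZMod N, dft f α * chr N α x
      = (N : ℂ)⁻¹ * ∑ t : ZMod N, f t * E N (α * (x - t)) := by
    intro α
    rw [dft, mul_assoc, Finset.sum_mul]
    congr 1
    refine Finset.sum_congr rfl fun t _ => ?_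
    rw [mul_assoc, chr_neg, chr_eq, ← E_add,
      show -(α * t) + α * x = α * (x - t) by ring]
  -- step 2: the inner sum over the coset A
  have himg : A = HF.image (fun h => z + h) := by
    ext α
    simp only [hA, hHF, Finset.mem_filter, Finset.mem_univ, true_and, Finset.mem_image]
    constructor
    · rintro ⟨h, hh, rfl⟩; exact ⟨h, hh, rfl⟩
    · rintro ⟨h, hh, rfl⟩; exact ⟨h, hh, rfl⟩
  have hAsum : ∀ w : ZMod N, ∑ α ∈ A, E N (α * w)
      = E N (z * w) * (if w ∈ perp N H then (HF.card : ℂ) else 0) := by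
    intro w
    rw [himg, Finset.sum_image (fun a _ b _ h => by simpa using h)]
    rw [← sum_H N H w, Finset.mul_sum]
    refine Finset.sum_congr rfl fun h _ => ?_
    rw [← E_add, show z * w + w * h = (z + h) * w by ring]
  -- main computation
  calc ∑ α ∈ A, dft f α * chr N α x
      = (N : ℂ)⁻¹ * ∑ t : ZMod N, f t * ∑ α ∈ A, E N (α * (x - t)) := by
        rw [Finset.sum_congr rfl fun α _ => step1 α, ← Finset.mul_sum, Finset.sum_comm]
        congr 1
        exact Finset.sum_congr rfl fun t _ => (Finset.mul_sum _ _ _).symm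
    _ = (N : ℂ)⁻¹ * ∑ t : ZMod N,
          (if x - t ∈ perp N H then (HF.card : ℂ) * (f t * E N (z * (x - t))) else 0) := by
        congr 1
        refine Finset.sum_congr rfl fun t _ => ?_
        rw [hAsum (x - t)]
        split_ifs <;> ring
    _ = (N : ℂ)⁻¹ * ((HF.card : ℂ) *
          ∑ t ∈ Finset.univ.filter (fun t : ZMod N => x - t ∈ perp N H),
            f t * E N (z * (x - t))) := by
        congr 1
        rw [← Finset.sum_filter, Finset.mul_sum]
    _ = (N : ℂ)⁻¹ * ((HF.card : ℂ) * ∑ y ∈ P, f (x - y) * E N (z * y)) := by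
        congr 2
        apply Finset.sum_nbij' (fun t => x - t) (fun y => x - y)
        · intro t ht
          simp only [hPd, Finset.mem_filter, Finset.mem_univ, true_and] at ht ⊢
          exact ht
        · intro y hy
          simp only [hPd, Finset.mem_filter, Finset.mem_univ, true_and] at hy ⊢
          simpa using hy
        · intro t _; simp
        · intro y _; simp
        · intro t _; simp
    _ = (P.card : ℂ)⁻¹ * ∑ y ∈ P, f (x - y) * chr N z y := by
        simp only [chr_eq]
        have hcard := card_key N H
        rw [← hPd, ← hHF] at hcard
        have hc2 : (N : ℂ)⁻¹ * (HF.card : ℂ) = (P.card : ℂ)⁻¹ := by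
          field_simp
          linear_combination hcard
        rw [← mul_assoc, hc2]
end

section
/- Let N ≥ 2 be an integer and let α be an integer not divisible by N. Then |(1/N) · Σ_{x integer, 0 ≤ x < N/2} e^{−2πi·α·x/N}| < 1/| |α|_N |, where |α|_N denotes the unique integer in the interval (−N/2, N/2] congruent to α modulo N. -/
open Real Complex

lemma abs_exp_mul_I_sub_one (θ : ℝ) :
    ‖Complex.exp (θ * Complex.I) - 1‖ = 2 * |Real.sin (θ / 2)| := by
  have key : ‖Complex.exp (θ * Complex.I) - 1‖ ^ 2
      = (2 * |Real.sin (θ / 2)|) ^ 2 := by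
    rw [Complex.sq_norm, Complex.exp_mul_I, ← Complex.ofReal_cos, ← Complex.ofReal_sin]
    have h1 : Real.cos (θ / 2) ^ 2 = 1 / 2 + Real.cos (2 * (θ / 2)) / 2 := Real.cos_sq _
    have h2 : Real.sin (θ / 2) ^ 2 + Real.cos (θ / 2) ^ 2 = 1 := Real.sin_sq_add_cos_sq _
    have h3 : Real.sin θ ^ 2 + Real.cos θ ^ 2 = 1 := Real.sin_sq_add_cos_sq _
    have h4 : 2 * (θ / 2) = θ := by ring
    rw [h4] at h1
    simp [Complex.normSq_apply, mul_pow, sq_abs, Complex.cos_ofReal_re, Complex.sin_ofReal_re]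
    nlinarith [h1, h2, h3]
  have h0 : (0:ℝ) ≤ ‖Complex.exp (θ * Complex.I) - 1‖ := norm_nonneg _
  have h0' : (0:ℝ) ≤ 2 * |Real.sin (θ / 2)| := by positivity
  exact (sq_eq_sq₀ h0 h0').mp key


/-- For `α` not divisible by `N`, the averaged character sum over the half interval
`0 ≤ x < N/2` is bounded by `1/| |α|_N |`, where `|α|_N ∈ (−N/2, N/2]` is the
minimal-absolute-value representative of `α` mod `N`. -/
theorem stmt3 (N : ℕ) [NeZero N] (hN : 2 ≤ N) (α : ℤ) (hα : ¬ (N : ℤ) ∣ α) :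
    ‖(N : ℂ)⁻¹ * ∑ x ∈ Finset.range ((N + 1) / 2),
        Complex.exp (-(2 * (Real.pi : ℂ) * Complex.I * (α : ℂ) * (x : ℂ) / (N : ℂ)))‖
      < 1 / ((((α : ZMod N).valMinAbs).natAbs : ℝ)) := by
  set a : ℤ := (α : ZMod N).valMinAbs with ha_def
  have hNR : (0:ℝ) < N := by positivity
  have hNC : (N:ℂ) ≠ 0 := Nat.cast_ne_zero.mpr (NeZero.ne N)
  -- a ≠ 0
  have ha0 : a ≠ 0 := by
    rw [ha_def, Ne, ZMod.valMinAbs_eq_zero]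
    simpa [ZMod.intCast_zmod_eq_zero_iff_dvd] using hα
  -- congruence: N ∣ α - a
  have hcong : (N:ℤ) ∣ α - a := by
    have : ((α - a : ℤ) : ZMod N) = 0 := by
      push_cast [ha_def, ZMod.coe_valMinAbs]
      ring
    exact (ZMod.intCast_zmod_eq_zero_iff_dvd _ _).mp this
  obtain ⟨k, hk⟩ := hcong
  have hαa : (α:ℝ) = a + N * k := by
    have : (α:ℤ) = a + N * k := by linarith [hk]
    exact_mod_cast congrArg (Int.cast : ℤ → ℝ) this
  -- natAbs bound
  have habs_le : (a.natAbs : ℝ) ≤ N / 2 := by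
    have h1 : a.natAbs ≤ N / 2 := ZMod.natAbs_valMinAbs_le _
    have h2 : ((N / 2 : ℕ) : ℝ) ≤ (N:ℝ) / 2 := by
      exact Nat.cast_div_le
    exact le_trans (by exact_mod_cast h1) h2
  have hA : (0:ℝ) < (a.natAbs:ℝ) := by
    have : 0 < a.natAbs := Int.natAbs_pos.mpr ha0
    exact_mod_cast this
  have hANa : |(a:ℝ)| = (a.natAbs:ℝ) := by
    rw [← Int.cast_abs, Int.abs_eq_natAbs, Int.cast_natCast]
  set θ : ℝ := -(2 * Real.pi * α) / N with hθ
  -- rewrite each term as a power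
  have hsum : ∑ x ∈ Finset.range ((N+1)/2),
        Complex.exp (-(2 * (Real.pi:ℂ) * Complex.I * α * x / N))
      = ∑ x ∈ Finset.range ((N+1)/2), (Complex.exp ((θ:ℂ) * Complex.I)) ^ x := by
    refine Finset.sum_congr rfl fun x _ => ?_
    rw [← Complex.exp_nat_mul]
    congr 1
    rw [hθ]
    push_cast
    ring
  -- the base is not 1
  have hω : Complex.exp ((θ:ℂ) * Complex.I) ≠ 1 := by
    intro h
    obtain ⟨n, hn⟩ := Complex.exp_eq_one_iff.mp h
    have h2 : (θ:ℂ) * Complex.I = ((n:ℂ) * (2*(Real.pi:ℂ))) * Complex.I := by rw [hn]; ring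
    have hI := mul_right_cancel₀ Complex.I_ne_zero h2
    have hR : θ = (n:ℝ) * (2*Real.pi) := by exact_mod_cast hI
    rw [hθ] at hR
    have hπ := Real.pi_ne_zero
    have hNR' : (N:ℝ) ≠ 0 := ne_of_gt hNR
    have hαR : (α:ℝ) = -(n*N) := by
      field_simp at hR
      nlinarith [hR, Real.pi_pos]
    have hαZ : α = -(n*N) := by exact_mod_cast hαR
    exact hα ⟨-n, by rw [hαZ]; ring⟩
  rw [hsum, geom_sum_eq hω]
  set M := (N+1)/2 with hM
  set ω := Complex.exp ((θ:ℂ) * Complex.I) with hωdef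
  have habsω : ‖ω‖ = 1 := Complex.norm_exp_ofReal_mul_I θ
  have hnum : ‖ω ^ M - 1‖ ≤ 2 := by
    calc ‖ω ^ M - 1‖ ≤ ‖ω ^ M‖ + ‖(1:ℂ)‖ := by
          simpa using norm_sub_le (ω ^ M) (1:ℂ)
      _ = 2 := by rw [norm_pow, habsω, one_pow, norm_one]; norm_num
  have hden : ‖ω - 1‖ = 2 * |Real.sin (θ/2)| := abs_exp_mul_I_sub_one θ
  -- lower bound the sine
  have hsin : 2 * (a.natAbs:ℝ) / N ≤ |Real.sin (θ/2)| := by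
    have hθ2 : θ / 2 = -(Real.pi * α / N) := by rw [hθ]; ring
    have e1 : |Real.sin (θ/2)| = |Real.sin (Real.pi * α / N)| := by
      rw [hθ2, Real.sin_neg, abs_neg]
    have e2 : Real.pi * α / N = Real.pi * a / N + k * Real.pi := by
      rw [hαa]; field_simp
    have e3 : |Real.sin (Real.pi * α / N)| = |Real.sin (Real.pi * a / N)| := by
      rw [e2, Real.sin_add_int_mul_pi, abs_mul]
      have hone : |((-1:ℝ))^k| = 1 := by
        rcases Int.even_or_odd k with h | h
        · rw [h.neg_one_zpow]; norm_num
        · rw [Odd.neg_one_zpow h]; norm_num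
      rw [hone, one_mul]
    have hhalf : Real.pi * (a.natAbs:ℝ) / N ≤ Real.pi / 2 := by
      rw [div_le_div_iff₀ hNR two_pos] at *
      nlinarith [Real.pi_pos, habs_le]
    have hnn : 0 ≤ Real.pi * (a.natAbs:ℝ) / N := by positivity
    have e4 : |Real.sin (Real.pi * a / N)| = Real.sin (Real.pi * (a.natAbs:ℝ) / N) := by
      rcases le_or_gt 0 (a:ℝ) with h | h
      · have hna : (a.natAbs:ℝ) = (a:ℝ) := by rw [← hANa, _root_.abs_of_nonneg h]
        rw [hna]
        exact abs_of_nonneg (Real.sin_nonneg_of_nonneg_of_le_pi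
          (by positivity) (by nlinarith [Real.pi_pos, hna ▸ hhalf]))
      · have hna : (a.natAbs:ℝ) = -(a:ℝ) := by rw [← hANa, _root_.abs_of_neg h]
        have : Real.pi * a / N = -(Real.pi * (a.natAbs:ℝ) / N) := by rw [hna]; ring
        rw [this, Real.sin_neg, abs_neg]
        exact abs_of_nonneg (Real.sin_nonneg_of_nonneg_of_le_pi hnn
          (by nlinarith [Real.pi_pos]))
    have e5 : 2 * (a.natAbs:ℝ) / N ≤ Real.sin (Real.pi * (a.natAbs:ℝ) / N) := by
      have := Real.mul_le_sin hnn hhalf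
      calc 2 * (a.natAbs:ℝ) / N = 2 / Real.pi * (Real.pi * (a.natAbs:ℝ) / N) := by
            field_simp
        _ ≤ _ := this
    rw [e1, e3, e4]; exact e5
  have hden_lb : 2 * (2 * (a.natAbs:ℝ) / N) ≤ ‖ω - 1‖ := by
    rw [hden]; linarith
  have hden_pos : (0:ℝ) < 2 * (2 * (a.natAbs:ℝ) / N) := by positivity
  calc ‖(N:ℂ)⁻¹ * ((ω ^ M - 1) / (ω - 1))‖
      = (N:ℝ)⁻¹ * (‖ω ^ M - 1‖ / ‖ω - 1‖) := by
        rw [norm_mul, norm_div, norm_inv, Complex.norm_natCast]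
    _ ≤ (N:ℝ)⁻¹ * (2 / (2 * (2 * (a.natAbs:ℝ) / N))) := by
        gcongr
    _ = 1 / (2 * (a.natAbs:ℝ)) := by
        field_simp
    _ < 1 / (a.natAbs:ℝ) := by
        rw [div_lt_div_iff₀ (by positivity) hA]; nlinarith
end

section
/- Let N ≥ 2 and T be integers with 1 ≤ T ≤ N/2. Then |(1/T) · Σ_{x=0}^{T−1} e^{2πi·x/N}| ≥ 2/π; in particular this quantity is strictly greater than 1/2. -/
open Real Complex Finset

lemma aux_abs_exp_mul_I_sub_one (a : ℝ) :
    ‖Complex.exp (a * Complex.I) - 1‖ = 2 * |Real.sin (a / 2)| := by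
  have h1 : Complex.exp (a * Complex.I) - 1
      = ((Real.cos a - 1 : ℝ) : ℂ) + ((Real.sin a : ℝ) : ℂ) * Complex.I := by
    rw [Complex.exp_mul_I, ← Complex.ofReal_cos, ← Complex.ofReal_sin]
    push_cast
    ring
  rw [h1, Complex.norm_add_mul_I]
  have hs := Real.sin_sq_add_cos_sq a
  have hc : Real.cos a = 1 - 2 * Real.sin (a / 2) ^ 2 := by
    have h := Real.cos_sq (a / 2)
    rw [show 2 * (a / 2) = a by ring] at h
    nlinarith [Real.sin_sq_add_cos_sq (a / 2)]
  have : (Real.cos a - 1) ^ 2 + Real.sin a ^ 2 = (2 * |Real.sin (a / 2)|) ^ 2 := by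
    rw [mul_pow, _root_.sq_abs]
    nlinarith
  rw [this, Real.sqrt_sq (by positivity)]

/-- For `1 ≤ T ≤ N/2`, Bleichenbacher's bias `|(1/T) Σ_{x=0}^{T−1} e^{2πi·x/N}|` is at
least `2/π`; in particular it is strictly greater than `1/2`. -/
theorem stmt18 (N T : ℕ) (hN : 2 ≤ N) (hT1 : 1 ≤ T) (hTN : 2 * T ≤ N) :
    2 / Real.pi ≤ ‖(T : ℂ)⁻¹ * ∑ x ∈ Finset.range T,
        Complex.exp (2 * (Real.pi : ℂ) * Complex.I * (x : ℂ) / (N : ℂ))‖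
    ∧ 1 / 2 < ‖(T : ℂ)⁻¹ * ∑ x ∈ Finset.range T,
        Complex.exp (2 * (Real.pi : ℂ) * Complex.I * (x : ℂ) / (N : ℂ))‖ := by
  have hπ : (0:ℝ) < Real.pi := Real.pi_pos
  have hN0 : (0:ℝ) < (N:ℝ) := by positivity
  have hT0 : (0:ℝ) < (T:ℝ) := by exact_mod_cast hT1
  have hTN' : (T:ℝ) / (N:ℝ) ≤ 1 / 2 := by
    rw [div_le_div_iff₀ hN0 (by norm_num)]
    have : (2:ℝ) * T ≤ N := by exact_mod_cast hTN
    linarith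
  set r : ℂ := Complex.exp (2 * (Real.pi : ℂ) * Complex.I / (N:ℂ)) with hr
  -- rewrite terms as powers
  have hterm : ∀ x : ℕ, Complex.exp (2 * (Real.pi : ℂ) * Complex.I * (x : ℂ) / (N : ℂ)) = r ^ x := by
    intro x
    rw [hr, ← Complex.exp_nat_mul]
    ring_nf
  have hr1 : r ≠ 1 := by
    rw [hr]
    intro h
    rw [Complex.exp_eq_one_iff] at h
    obtain ⟨n, hn⟩ := h
    have hπI : 2 * (Real.pi:ℂ) * Complex.I ≠ 0 := by
      simp [Complex.I_ne_zero, Real.pi_ne_zero]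
    have hNc : (N:ℂ) ≠ 0 := by exact_mod_cast hN0.ne'
    have : (N:ℂ) * (n:ℂ) = 1 := by
      have hmul := congrArg (fun z => z * (N:ℂ)) hn
      simp only [div_mul_cancel₀ _ hNc] at hmul
      have := mul_right_cancel₀ hπI (by linear_combination -hmul :
        (N:ℂ) * (n:ℂ) * (2 * (Real.pi:ℂ) * Complex.I) = 1 * (2 * (Real.pi:ℂ) * Complex.I))
      simpa using this
    have hre : (N:ℝ) * (n:ℝ) = 1 := by exact_mod_cast this
    have hn2 : (2:ℝ) ≤ N := by exact_mod_cast hN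
    rcases le_or_gt (n:ℝ) 0 with h | h
    · nlinarith
    · have : (1:ℝ) ≤ (n:ℝ) := by exact_mod_cast (by exact_mod_cast h : (0:ℤ) < n)
      nlinarith
  have hsum : ∑ x ∈ Finset.range T, Complex.exp (2 * (Real.pi : ℂ) * Complex.I * (x : ℂ) / (N : ℂ))
      = (r ^ T - 1) / (r - 1) := by
    simp_rw [hterm]
    exact geom_sum_eq hr1 T
  have hrT : r ^ T = Complex.exp (((2 * Real.pi * T / N : ℝ) : ℂ) * Complex.I) := by
    rw [hr, ← Complex.exp_nat_mul]
    push_cast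
    ring_nf
  have hrr : r = Complex.exp (((2 * Real.pi / N : ℝ) : ℂ) * Complex.I) := by
    rw [hr]; push_cast; ring_nf
  have h1 : ‖r ^ T - 1‖ = 2 * |Real.sin (Real.pi * T / N)| := by
    rw [hrT, aux_abs_exp_mul_I_sub_one,
      show (2 * Real.pi * (T:ℝ) / N) / 2 = Real.pi * T / N by ring]
  have h2 : ‖r - 1‖ = 2 * |Real.sin (Real.pi / N)| := by
    rw [hrr, aux_abs_exp_mul_I_sub_one,
      show (2 * Real.pi / (N:ℝ)) / 2 = Real.pi / N by ring]
  -- angle bounds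
  have hang1 : 0 < Real.pi * T / N := by positivity
  have hang2 : Real.pi * T / N ≤ Real.pi / 2 := by
    rw [div_le_div_iff₀ hN0 (by norm_num)]
    have : (2:ℝ) * T ≤ N := by exact_mod_cast hTN
    nlinarith
  have hang3 : 0 < Real.pi / N := by positivity
  have hang4 : Real.pi / N ≤ Real.pi / 2 := by
    apply div_le_div_of_nonneg_left hπ.le (by norm_num) (by exact_mod_cast hN)
  have hsin1 : 0 < Real.sin (Real.pi * T / N) :=
    Real.sin_pos_of_pos_of_lt_pi hang1 (lt_of_le_of_lt hang2 (by linarith))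
  have hsin2 : 0 < Real.sin (Real.pi / N) :=
    Real.sin_pos_of_pos_of_lt_pi hang3 (lt_of_le_of_lt hang4 (by linarith))
  have habs : ‖(T : ℂ)⁻¹ * ∑ x ∈ Finset.range T,
        Complex.exp (2 * (Real.pi : ℂ) * Complex.I * (x : ℂ) / (N : ℂ))‖
      = Real.sin (Real.pi * T / N) / (T * Real.sin (Real.pi / N)) := by
    rw [hsum, norm_mul, norm_div, h1, h2, norm_inv, Complex.norm_natCast,
      abs_of_pos hsin1, abs_of_pos hsin2]
    field_simp
  rw [habs]
  -- Jordan's inequality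
  have hjord : 2 * (T:ℝ) / N ≤ Real.sin (Real.pi * T / N) := by
    have := Real.mul_le_sin hang1.le hang2
    calc 2 * (T:ℝ) / N = 2 / Real.pi * (Real.pi * T / N) := by field_simp
    _ ≤ _ := this
  have hsinle : Real.sin (Real.pi / N) ≤ Real.pi / N := Real.sin_le hang3.le
  have hmain : 2 / Real.pi ≤ Real.sin (Real.pi * T / N) / (T * Real.sin (Real.pi / N)) := by
    rw [div_le_div_iff₀ hπ (by positivity)]
    calc 2 * (T * Real.sin (Real.pi / N)) ≤ 2 * (T * (Real.pi / N)) := by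
          have : (0:ℝ) ≤ T := hT0.le
          nlinarith
      _ ≤ Real.sin (Real.pi * T / N) * Real.pi := by
          have : 2 * (T:ℝ) / N * Real.pi ≤ Real.sin (Real.pi * T / N) * Real.pi :=
            mul_le_mul_of_nonneg_right hjord hπ.le
          calc 2 * ((T:ℝ) * (Real.pi / N)) = 2 * (T:ℝ) / N * Real.pi := by ring
            _ ≤ _ := this
  refine ⟨hmain, lt_of_lt_of_le ?_ hmain⟩
  rw [div_lt_div_iff₀ (by norm_num) hπ]
  nlinarith [Real.pi_lt_d2]
end

section
/- Let p be an odd prime. For x ∈ ℤ_p, let LSB(x) ∈ {0,1} be the parity of the representative of x in {0,…,p−1}, and define half : ℤ_p → {−1,1} by half(y) = 1 if the representative of y in {0,…,p−1} is less than p/2 and half(y) = −1 otherwise. Then for every x ∈ ℤ_p, (−1)^{LSB(x)} = half(2^{−1}·x), where 2^{−1} is the inverse of 2 modulo p. -/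
/-- For an odd prime `p`: `(−1)^{LSB(x)} = half(2⁻¹·x)` on `ℤ_p`, where `LSB(x)` is the
parity of the representative of `x` in `{0,…,p−1}` and `half(y) = 1` if the
representative of `y` is less than `p/2` and `half(y) = −1` otherwise. -/
theorem stmt19 (p : ℕ) [Fact (Nat.Prime p)] (hp : p ≠ 2) (x : ZMod p) :
    ((-1 : ℤ) ^ (x.val % 2))
      = (if 2 * ((2⁻¹ : ZMod p) * x).val < p then (1 : ℤ) else -1) := by
  have hprime := (Fact.out : p.Prime)
  have hp2 : 2 < p := lt_of_le_of_ne hprime.two_le (Ne.symm hp)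
  have hodd : Odd p := hprime.odd_of_ne_two hp
  set y : ZMod p := (2⁻¹ : ZMod p) * x with hy
  have h2 : (2 : ZMod p) ≠ 0 := by
    intro h
    have : p ∣ 2 := (ZMod.natCast_eq_zero_iff 2 p).mp (by exact_mod_cast h)
    have := Nat.le_of_dvd (by norm_num) this
    omega
  have hmul : (2 : ZMod p) * y = x := by
    rw [hy, ← mul_assoc, mul_inv_cancel₀ h2, one_mul]
  have hval2 : ((2:ZMod p)).val = 2 := by
    have : ((2:ℕ) : ZMod p).val = 2 % p := ZMod.val_natCast p 2
    simpa [Nat.mod_eq_of_lt hp2] using this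
  have hxval : x.val = (2 * y.val) % p := by
    rw [← hmul, ZMod.val_mul, hval2]
  have hylt : y.val < p := ZMod.val_lt y
  by_cases h : 2 * y.val < p
  · rw [if_pos h]
    have : x.val = 2 * y.val := by rw [hxval, Nat.mod_eq_of_lt h]
    simp [this, Nat.mul_mod_right]
  · rw [if_neg h]
    push_neg at h
    have hlt2p : 2 * y.val < 2 * p := by omega
    have : x.val = 2 * y.val - p := by
      rw [hxval, Nat.mod_eq_sub_mod h, Nat.mod_eq_of_lt (by omega)]
    have hodd' : x.val % 2 = 1 := by
      obtain ⟨k, hk⟩ := hodd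
      omega
    simp [hodd']
end
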